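/- Let T be an element of the Schur class S(H), i.e. a structured upper triangular contraction on ℓ²(F_N^+), and let A = 1 - T*T. Then A satisfies the displacement equation A - Σ_{k=1}^N C_k A C_k* = P_∅ - T* P_∅ T, where P_∅ is the orthogonal projection of ℓ²(F_N^+) onto the one-dimensional span of e_∅. (The right-hand side is G J G* for the generator G with columns (δ_{σ,∅})_σ and (conj T(∅,σ))_σ and the signature J = diag(1,-1).) -/

import Mathlib

open scoped ComplexOrder

noncomputable section

/-- Words over the alphabet `{1,…,N}`: the free monoid `F_N^+` (the empty list is `∅`). -/
abbrev Word (N : ℕ) := List (Fin N)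

/-- The Hilbert space `ℓ²(F_N^+)`. -/
abbrev H2 (N : ℕ) : Type := lp (fun _ : Word N => ℂ) 2

/-- The canonical orthonormal basis vector `e_σ`. -/
def eb {N : ℕ} (σ : Word N) : H2 N := lp.single 2 σ 1

/-- The matrix entry `T(σ,τ) = ⟨T e_τ, e_σ⟩` (inner product linear in the first argument). -/
def entry {N : ℕ} (T : H2 N →L[ℂ] H2 N) (σ τ : Word N) : ℂ := (T (eb τ)) σ

/-- `T` is structured upper triangular. -/
def IsSUT {N : ℕ} (T : H2 N →L[ℂ] H2 N) : Prop :=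
  (∀ (a b : Fin N) (σ τ : Word N),
      entry T (a :: σ) (b :: τ) = if a = b then entry T σ τ else 0) ∧
  (∀ σ τ : Word N, τ.length < σ.length → entry T σ τ = 0)

open scoped ComplexInnerProductSpace

/-- Two operators agreeing on all basis vectors are equal. -/
theorem ext_eb {N : ℕ} {A B : H2 N →L[ℂ] H2 N} (h : ∀ σ, A (eb σ) = B (eb σ)) : A = B := by
  refine ContinuousLinearMap.ext fun f => ?_
  have hs : HasSum (fun σ : Word N => f σ • eb σ) f := by
    have h0 := lp.hasSum_single (E := fun _ : Word N => ℂ) ENNReal.ofNat_ne_top f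
    refine h0.congr_fun fun σ => ?_
    have := lp.single_smul (E := fun _ : Word N => ℂ) 2 σ (f σ) (1 : ℂ)
    simp only [smul_eq_mul, mul_one] at this
    rw [this]; rfl
  have hA : HasSum (fun σ : Word N => f σ • A (eb σ)) (A f) := by
    simpa using hs.mapL A
  have hB : HasSum (fun σ : Word N => f σ • B (eb σ)) (B f) := by
    simpa using hs.mapL B
  exact hA.unique (by simpa only [h] using hB)

theorem eb_apply {N : ℕ} (σ τ : Word N) : (eb σ : H2 N) τ = if τ = σ then 1 else 0 := by
  by_cases h : τ = σ
  · subst h; simp [eb, lp.single_apply_self]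
  · simp [eb, lp.single_apply_ne _ _ _ h, h]

theorem inner_eb_left {N : ℕ} (σ : Word N) (f : H2 N) : ⟪eb σ, f⟫ = f σ := by
  rw [eb, lp.inner_single_left]
  simp [RCLike.inner_apply]

theorem apply_eq_inner {N : ℕ} (f : H2 N) (σ : Word N) : f σ = ⟪eb σ, f⟫ :=
  (inner_eb_left σ f).symm

theorem adj_apply {N : ℕ} (A : H2 N →L[ℂ] H2 N) (x : H2 N) (σ : Word N) :
    (ContinuousLinearMap.adjoint A x) σ = ⟪A (eb σ), x⟫ := by
  rw [apply_eq_inner, ContinuousLinearMap.adjoint_inner_right]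

theorem adjC_apply {N : ℕ} (C : Fin N → (H2 N →L[ℂ] H2 N))
    (hC : ∀ (k : Fin N) (σ : Word N), C k (eb σ) = eb (k :: σ))
    (k : Fin N) (x : H2 N) (σ : Word N) :
    (ContinuousLinearMap.adjoint (C k) x) σ = x (k :: σ) := by
  rw [adj_apply, hC, inner_eb_left]

theorem adjC_eb_nil {N : ℕ} (C : Fin N → (H2 N →L[ℂ] H2 N))
    (hC : ∀ (k : Fin N) (σ : Word N), C k (eb σ) = eb (k :: σ)) (k : Fin N) :
    ContinuousLinearMap.adjoint (C k) (eb ([] : Word N)) = 0 := by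
  refine lp.ext (funext fun σ => ?_)
  rw [adjC_apply C hC, eb_apply]
  simp

theorem adjC_eb_cons {N : ℕ} (C : Fin N → (H2 N →L[ℂ] H2 N))
    (hC : ∀ (k : Fin N) (σ : Word N), C k (eb σ) = eb (k :: σ)) (k j : Fin N) (τ : Word N) :
    ContinuousLinearMap.adjoint (C k) (eb (j :: τ)) = if j = k then eb τ else 0 := by
  refine lp.ext (funext fun σ => ?_)
  rw [adjC_apply C hC, eb_apply]
  rcases eq_or_ne j k with rfl | hjk
  · simp [eb_apply]
  · have hne : (k :: σ : Word N) ≠ j :: τ := fun h => hjk (by injection h with h1 _; exact h1.symm)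
    rw [if_neg hne, if_neg hjk]; simp

theorem sum_CCadj {N : ℕ} (C : Fin N → (H2 N →L[ℂ] H2 N))
    (hC : ∀ (k : Fin N) (σ : Word N), C k (eb σ) = eb (k :: σ))
    (P : H2 N →L[ℂ] H2 N)
    (hP : ∀ f : H2 N, P f = (f ([] : Word N)) • eb ([] : Word N)) :
    (∑ k : Fin N, C k ∘L ContinuousLinearMap.adjoint (C k)) = 1 - P := by
  apply ext_eb
  intro τ
  rw [ContinuousLinearMap.sum_apply]
  match τ with
  | [] =>
    have hz : ∀ k : Fin N, (C k ∘L ContinuousLinearMap.adjoint (C k)) (eb ([] : Word N)) = 0 := by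
      intro k
      simp [ContinuousLinearMap.comp_apply, adjC_eb_nil C hC]
    rw [Finset.sum_congr rfl fun k _ => hz k, Finset.sum_const, smul_zero]
    have h1 : (eb ([] : Word N)) ([] : Word N) = 1 := by simp [eb_apply]
    simp [ContinuousLinearMap.sub_apply, ContinuousLinearMap.one_apply, hP, h1]
  | j :: τ' =>
    have hterm : ∀ k : Fin N, (C k ∘L ContinuousLinearMap.adjoint (C k)) (eb (j :: τ'))
        = if j = k then eb (j :: τ') else 0 := by
      intro k
      rw [ContinuousLinearMap.comp_apply, adjC_eb_cons C hC]
      rcases eq_or_ne j k with rfl | h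
      · simp [hC]
      · simp [h]
    rw [Finset.sum_congr rfl fun k _ => hterm k]
    have hnil : (eb (j :: τ') : H2 N) ([] : Word N) = 0 := by simp [eb_apply]
    simp [Finset.sum_ite_eq, ContinuousLinearMap.sub_apply, ContinuousLinearMap.one_apply,
      hP, hnil]

theorem adjC_T_comm {N : ℕ} (T : H2 N →L[ℂ] H2 N) (hT : IsSUT T)
    (C : Fin N → (H2 N →L[ℂ] H2 N))
    (hC : ∀ (k : Fin N) (σ : Word N), C k (eb σ) = eb (k :: σ)) (k : Fin N) :
    ContinuousLinearMap.adjoint (C k) ∘L T = T ∘L ContinuousLinearMap.adjoint (C k) := by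
  apply ext_eb
  intro τ
  rw [ContinuousLinearMap.comp_apply, ContinuousLinearMap.comp_apply]
  match τ with
  | [] =>
    rw [adjC_eb_nil C hC, map_zero]
    refine lp.ext (funext fun σ => ?_)
    rw [adjC_apply C hC]
    have h0 : (T (eb ([] : Word N))) (k :: σ) = entry T (k :: σ) [] := rfl
    rw [h0, hT.2 _ _ (by simp)]
    rfl
  | j :: τ' =>
    rw [adjC_eb_cons C hC]
    refine lp.ext (funext fun σ => ?_)
    rw [adjC_apply C hC]
    have h0 : (T (eb (j :: τ'))) (k :: σ) = entry T (k :: σ) (j :: τ') := rfl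
    rw [h0, hT.1 k j σ τ']
    rcases eq_or_ne j k with rfl | h
    · simp only [if_pos rfl]; rfl
    · rw [if_neg (Ne.symm h), if_neg h, map_zero]
      rfl

/-- For `T` in the Schur class `S(H)` and `A = 1 - T*T`, the displacement
equation `A - ∑ₖ Cₖ A Cₖ* = P_∅ - T* P_∅ T` holds, where `Cₖ e_σ = e_{kσ}` and `P_∅` is the
orthogonal projection onto the span of `e_∅`. -/
theorem schur_displacement {N : ℕ} (hN : 1 ≤ N)
    (T : H2 N →L[ℂ] H2 N) (hT : IsSUT T) (hTnorm : ‖T‖ ≤ 1)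
    (C : Fin N → (H2 N →L[ℂ] H2 N))
    (hC : ∀ (k : Fin N) (σ : Word N), C k (eb σ) = eb (k :: σ))
    (P : H2 N →L[ℂ] H2 N)
    (hP : ∀ f : H2 N, P f = (f ([] : Word N)) • eb ([] : Word N)) :
    (1 - ContinuousLinearMap.adjoint T ∘L T)
        - ∑ k : Fin N, C k ∘L ((1 - ContinuousLinearMap.adjoint T ∘L T)
            ∘L ContinuousLinearMap.adjoint (C k))
      = P - ContinuousLinearMap.adjoint T ∘L (P ∘L T) := by
  have hcomm' : ∀ k : Fin N,
      ContinuousLinearMap.adjoint (C k) * T = T * ContinuousLinearMap.adjoint (C k) :=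
    fun k => adjC_T_comm T hT C hC k
  have hcomm : ∀ k : Fin N,
      ContinuousLinearMap.adjoint T * C k = C k * ContinuousLinearMap.adjoint T := by
    intro k
    have h := congrArg ContinuousLinearMap.adjoint (hcomm' k)
    simp only [ContinuousLinearMap.mul_def] at h ⊢
    rwa [ContinuousLinearMap.adjoint_comp, ContinuousLinearMap.adjoint_comp,
      ContinuousLinearMap.adjoint_adjoint] at h
  have hsum : (∑ k : Fin N, C k * ContinuousLinearMap.adjoint (C k)) = 1 - P :=
    sum_CCadj C hC P hP
  simp only [← ContinuousLinearMap.mul_def]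
  have hterm : ∀ k : Fin N,
      C k * ((1 - ContinuousLinearMap.adjoint T * T) * ContinuousLinearMap.adjoint (C k))
        = C k * ContinuousLinearMap.adjoint (C k)
          - ContinuousLinearMap.adjoint T
              * ((C k * ContinuousLinearMap.adjoint (C k)) * T) := by
    intro k
    calc C k * ((1 - ContinuousLinearMap.adjoint T * T) * ContinuousLinearMap.adjoint (C k))
        = C k * ContinuousLinearMap.adjoint (C k)
          - (C k * ContinuousLinearMap.adjoint T)
              * (T * ContinuousLinearMap.adjoint (C k)) := by noncomm_ring
      _ = C k * ContinuousLinearMap.adjoint (C k)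
          - (ContinuousLinearMap.adjoint T * C k)
              * (ContinuousLinearMap.adjoint (C k) * T) := by
            rw [← hcomm k, ← hcomm' k]
      _ = C k * ContinuousLinearMap.adjoint (C k)
          - ContinuousLinearMap.adjoint T
              * ((C k * ContinuousLinearMap.adjoint (C k)) * T) := by noncomm_ring
  rw [Finset.sum_congr rfl fun k _ => hterm k, Finset.sum_sub_distrib, ← Finset.mul_sum,
    ← Finset.sum_mul, hsum]
  noncomm_ring

end
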